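/- Let N ≥ 7 be an integer, α_N := (N(N-2))^{(N-2)/4}, and for δ > 0 let U_δ : ℝ^N → ℝ be U_δ(x) := α_N · δ^{(N-2)/2} / (δ² + |x|²)^{(N-2)/2}. Let ρ > 0. Then there exists a constant C > 0, depending only on N, such that for all δ₁, δ₂ with 0 < δ₂ ≤ δ₁ and √(δ₁δ₂) ≤ ρ, one has ∫_{{x ∈ ℝ^N : √(δ₁δ₂) ≤ |x| ≤ ρ}} U_{δ₁}(x)^{8N/((N-2)(N+2))} · U_{δ₂}(x)^{2N/(N+2)} dx ≤ C · (δ₂/δ₁)^{N/2}. -/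

import Mathlib

open MeasureTheory

/-- The standard bubble `U_δ(x) = α_N δ^((N-2)/2) / (δ² + |x|²)^((N-2)/2)`,
with `α_N = (N(N-2))^((N-2)/4)`. -/
noncomputable def bubble (N : ℕ) (δ : ℝ) (x : EuclideanSpace ℝ (Fin N)) : ℝ :=
  ((N : ℝ) * ((N : ℝ) - 2)) ^ (((N : ℝ) - 2) / 4) * δ ^ (((N : ℝ) - 2) / 2) /
    (δ ^ 2 + ‖x‖ ^ 2) ^ (((N : ℝ) - 2) / 2)

open Set Metric Real

lemma radial_aux (N : ℕ) (hN : 1 ≤ N) {s r : ℝ} (hs : (N : ℝ) < s) (hr : 0 < r) :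
    IntegrableOn (fun x : EuclideanSpace ℝ (Fin N) => ‖x‖ ^ (-s))
      {x : EuclideanSpace ℝ (Fin N) | r ≤ ‖x‖} volume ∧
    (∫ x in {x : EuclideanSpace ℝ (Fin N) | r ≤ ‖x‖}, ‖x‖ ^ (-s)) =
      (N : ℝ) * (volume (ball (0 : EuclideanSpace ℝ (Fin N)) 1)).toReal *
        (r ^ ((N : ℝ) - s) / (s - (N : ℝ))) := by
  haveI : Nonempty (Fin N) := ⟨⟨0, by omega⟩⟩
  haveI : Nontrivial (EuclideanSpace ℝ (Fin N)) := inferInstance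
  set E := EuclideanSpace ℝ (Fin N)
  have hs0 : 0 < s := lt_of_le_of_lt (Nat.cast_nonneg N) hs
  have hT : MeasurableSet {x : E | r ≤ ‖x‖} :=
    (isClosed_le continuous_const continuous_norm).measurableSet
  constructor
  · -- integrability
    refine Integrable.mono' (((integrable_one_add_norm (E := E) (μ := volume)
        (by rw [finrank_euclideanSpace_fin]; exact hs)).const_mul
        (((1 + r) / r) ^ s)).integrableOn) ?_ ?_
    · refine ContinuousOn.aestronglyMeasurable ?_ hT
      exact ContinuousOn.rpow_const (continuous_norm.continuousOn)
        (fun x hx => Or.inl (ne_of_gt (lt_of_lt_of_le hr hx)))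
    · refine (ae_restrict_iff' hT).mpr (Filter.Eventually.of_forall (fun x hx => ?_))
      have hx' : r ≤ ‖x‖ := hx
      have hx0 : 0 < ‖x‖ := lt_of_lt_of_le hr hx'
      rw [Real.norm_of_nonneg (by positivity)]
      have h1 : (1 + ‖x‖) ^ s ≤ ((1 + r) / r) ^ s * ‖x‖ ^ s := by
        rw [← Real.mul_rpow (by positivity) (by positivity)]
        refine Real.rpow_le_rpow (by positivity) ?_ hs0.le
        rw [div_mul_eq_mul_div, le_div_iff₀ hr]
        nlinarith
      rw [Real.rpow_neg hx0.le, Real.rpow_neg (by positivity)]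
      calc (‖x‖ ^ s)⁻¹ = ((1 + r) / r) ^ s * (((1 + r) / r) ^ s * ‖x‖ ^ s)⁻¹ := by
            have hc0 : ((1 + r) / r) ^ s ≠ 0 := ne_of_gt (by positivity)
            have hy0 : ‖x‖ ^ s ≠ 0 := ne_of_gt (by positivity)
            field_simp
        _ ≤ ((1 + r) / r) ^ s * ((1 + ‖x‖) ^ s)⁻¹ := by
            have := inv_anti₀ (by positivity : (0:ℝ) < (1 + ‖x‖) ^ s) h1
            nlinarith [Real.rpow_pos_of_pos (show (0:ℝ) < (1+r)/r by positivity) s]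
  · -- computation
    set f : ℝ → ℝ := Set.indicator (Ici r) (fun y => y ^ (-s)) with hf
    have h0 : (fun x : E => f ‖x‖)
        = Set.indicator {x : E | r ≤ ‖x‖} (fun x => ‖x‖ ^ (-s)) := by
      funext x
      by_cases hx : r ≤ ‖x‖ <;>
        simp [hf, Set.indicator_apply, hx, Set.mem_setOf_eq]
    have key := MeasureTheory.integral_fun_norm_addHaar (volume : Measure E) f
    rw [h0, integral_indicator hT] at key
    rw [key, finrank_euclideanSpace_fin]
    have h1 : (fun y : ℝ => y ^ (N - 1) • f y)
        = Set.indicator (Ici r) (fun y => y ^ (N - 1) * y ^ (-s)) := by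
      funext y
      by_cases hy : y ∈ Ici r <;>
        simp [hf, Set.indicator_apply, hy, smul_eq_mul]
    have h2 : (∫ y in Ioi (0:ℝ), y ^ (N - 1) • f y) = r ^ ((N:ℝ) - s) / (s - (N:ℝ)) := by
      rw [h1, MeasureTheory.setIntegral_indicator measurableSet_Ici]
      have h3 : Ioi (0:ℝ) ∩ Ici r = Ici r := by
        apply Set.inter_eq_self_of_subset_right
        intro y hy
        exact lt_of_lt_of_le hr hy
      rw [h3, MeasureTheory.integral_Ici_eq_integral_Ioi]
      have h4 : ∀ y ∈ Ioi r, y ^ (N - 1) * y ^ (-s) = y ^ ((N:ℝ) - 1 - s) := by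
        intro y hy
        have hy0 : 0 < y := lt_trans hr hy
        rw [← Real.rpow_natCast y (N - 1), ← Real.rpow_add hy0]
        congr 1
        have : ((N - 1 : ℕ) : ℝ) = (N : ℝ) - 1 := by
          have := Nat.cast_sub hN (R := ℝ)
          simpa using this
        rw [this]; ring
      rw [MeasureTheory.setIntegral_congr_fun measurableSet_Ioi h4,
        integral_Ioi_rpow_of_lt (by linarith) hr]
      have h5 : (N:ℝ) - 1 - s + 1 = (N:ℝ) - s := by ring
      rw [h5, show s - (N:ℝ) = -((N:ℝ) - s) by ring, div_neg, neg_div]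
    rw [h2, nsmul_eq_mul, smul_eq_mul, mul_assoc]
    rfl

lemma bubble_nonneg (N : ℕ) (hN2 : 2 ≤ N) {δ : ℝ} (hδ : 0 ≤ δ)
    (x : EuclideanSpace ℝ (Fin N)) : 0 ≤ bubble N δ x := by
  have h2 : (2:ℝ) ≤ (N:ℝ) := by exact_mod_cast hN2
  unfold bubble
  apply div_nonneg
  · exact mul_nonneg (Real.rpow_nonneg (by nlinarith) _) (Real.rpow_nonneg hδ _)
  · exact Real.rpow_nonneg (by positivity) _

lemma bubble_le_one (N : ℕ) (hN2 : 2 ≤ N) {δ : ℝ} (hδ : 0 < δ)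
    (x : EuclideanSpace ℝ (Fin N)) :
    bubble N δ x ≤ ((N : ℝ) * ((N : ℝ) - 2)) ^ (((N : ℝ) - 2) / 4) *
      δ ^ (-(((N : ℝ) - 2) / 2)) := by
  have h2 : (2:ℝ) ≤ (N:ℝ) := by exact_mod_cast hN2
  have hm : (0:ℝ) ≤ ((N:ℝ) - 2) / 2 := by linarith
  have hαnn : (0:ℝ) ≤ ((N:ℝ) * ((N:ℝ) - 2)) ^ (((N:ℝ) - 2) / 4) :=
    Real.rpow_nonneg (by nlinarith) _
  unfold bubble
  have hden : (δ ^ 2 : ℝ) ^ (((N:ℝ) - 2) / 2) ≤ (δ ^ 2 + ‖x‖ ^ 2) ^ (((N:ℝ) - 2) / 2) :=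
    Real.rpow_le_rpow (by positivity) (by nlinarith [sq_nonneg ‖x‖]) hm
  calc ((N : ℝ) * ((N : ℝ) - 2)) ^ (((N : ℝ) - 2) / 4) * δ ^ (((N : ℝ) - 2) / 2) /
        (δ ^ 2 + ‖x‖ ^ 2) ^ (((N:ℝ) - 2) / 2)
      ≤ ((N : ℝ) * ((N : ℝ) - 2)) ^ (((N : ℝ) - 2) / 4) * δ ^ (((N : ℝ) - 2) / 2) /
        (δ ^ 2 : ℝ) ^ (((N:ℝ) - 2) / 2) :=
        div_le_div_of_nonneg_left (mul_nonneg hαnn (Real.rpow_nonneg hδ.le _))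
          (Real.rpow_pos_of_pos (by positivity) _) hden
    _ = ((N : ℝ) * ((N : ℝ) - 2)) ^ (((N : ℝ) - 2) / 4) * δ ^ (-(((N : ℝ) - 2) / 2)) := by
        rw [mul_div_assoc, ← Real.rpow_natCast δ 2, ← Real.rpow_mul hδ.le,
          show ((2:ℕ):ℝ) * (((N:ℝ) - 2) / 2) = (N:ℝ) - 2 by push_cast; ring,
          ← Real.rpow_sub hδ,
          show (((N:ℝ) - 2) / 2) - ((N:ℝ) - 2) = -(((N:ℝ) - 2) / 2) by ring]

lemma bubble_le_two (N : ℕ) (hN2 : 2 ≤ N) {δ : ℝ} (hδ : 0 < δ)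
    {x : EuclideanSpace ℝ (Fin N)} (hx : 0 < ‖x‖) :
    bubble N δ x ≤ ((N : ℝ) * ((N : ℝ) - 2)) ^ (((N : ℝ) - 2) / 4) *
      (δ ^ (((N : ℝ) - 2) / 2) * ‖x‖ ^ (-((N : ℝ) - 2))) := by
  have h2 : (2:ℝ) ≤ (N:ℝ) := by exact_mod_cast hN2
  have hm : (0:ℝ) ≤ ((N:ℝ) - 2) / 2 := by linarith
  have hαnn : (0:ℝ) ≤ ((N:ℝ) * ((N:ℝ) - 2)) ^ (((N:ℝ) - 2) / 4) :=
    Real.rpow_nonneg (by nlinarith) _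
  unfold bubble
  have hden : (‖x‖ ^ 2 : ℝ) ^ (((N:ℝ) - 2) / 2) ≤ (δ ^ 2 + ‖x‖ ^ 2) ^ (((N:ℝ) - 2) / 2) :=
    Real.rpow_le_rpow (by positivity) (by nlinarith [sq_nonneg δ]) hm
  calc ((N : ℝ) * ((N : ℝ) - 2)) ^ (((N : ℝ) - 2) / 4) * δ ^ (((N : ℝ) - 2) / 2) /
        (δ ^ 2 + ‖x‖ ^ 2) ^ (((N:ℝ) - 2) / 2)
      ≤ ((N : ℝ) * ((N : ℝ) - 2)) ^ (((N : ℝ) - 2) / 4) * δ ^ (((N : ℝ) - 2) / 2) /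
        (‖x‖ ^ 2 : ℝ) ^ (((N:ℝ) - 2) / 2) :=
        div_le_div_of_nonneg_left (mul_nonneg hαnn (Real.rpow_nonneg hδ.le _))
          (Real.rpow_pos_of_pos (by positivity) _) hden
    _ = ((N : ℝ) * ((N : ℝ) - 2)) ^ (((N : ℝ) - 2) / 4) *
        (δ ^ (((N : ℝ) - 2) / 2) * ‖x‖ ^ (-((N : ℝ) - 2))) := by
        rw [mul_div_assoc, ← Real.rpow_natCast ‖x‖ 2, ← Real.rpow_mul (norm_nonneg x),
          show ((2:ℕ):ℝ) * (((N:ℝ) - 2) / 2) = (N:ℝ) - 2 by push_cast; ring,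
          Real.rpow_neg (norm_nonneg x)]
        ring

lemma exp_id1 (N : ℕ) (h1 : (N:ℝ) - 2 ≠ 0) (h2 : (N:ℝ) + 2 ≠ 0) :
    -(((N:ℝ) - 2) / 2 * (8 * (N:ℝ) / (((N:ℝ) - 2) * ((N:ℝ) + 2)))) +
      1 / 2 * ((N:ℝ) - ((N:ℝ) - 2) * (2 * (N:ℝ) / ((N:ℝ) + 2))) = -((N:ℝ) / 2) := by
  field_simp
  ring

lemma exp_id2 (N : ℕ) (h1 : (N:ℝ) - 2 ≠ 0) (h2 : (N:ℝ) + 2 ≠ 0) :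
    ((N:ℝ) - 2) / 2 * (2 * (N:ℝ) / ((N:ℝ) + 2)) +
      1 / 2 * ((N:ℝ) - ((N:ℝ) - 2) * (2 * (N:ℝ) / ((N:ℝ) + 2))) = (N:ℝ) / 2 := by
  field_simp
  ring

theorem stmt_16 (N : ℕ) (hN : 7 ≤ N) (ρ : ℝ) (hρ : 0 < ρ) :
    ∃ C : ℝ, 0 < C ∧ ∀ δ₁ δ₂ : ℝ, 0 < δ₂ → δ₂ ≤ δ₁ → Real.sqrt (δ₁ * δ₂) ≤ ρ →
      (∫ x in {x : EuclideanSpace ℝ (Fin N) |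
            Real.sqrt (δ₁ * δ₂) ≤ ‖x‖ ∧ ‖x‖ ≤ ρ},
          (bubble N δ₁ x) ^ (8 * (N : ℝ) / (((N : ℝ) - 2) * ((N : ℝ) + 2))) *
            (bubble N δ₂ x) ^ (2 * (N : ℝ) / ((N : ℝ) + 2))) ≤
        C * (δ₂ / δ₁) ^ ((N : ℝ) / 2) := by
  have hn : (7:ℝ) ≤ (N:ℝ) := by exact_mod_cast hN
  have h2 : (0:ℝ) < (N:ℝ) - 2 := by linarith
  have h2' : (0:ℝ) < (N:ℝ) + 2 := by linarith
  have h2ne : ((N:ℝ) - 2) ≠ 0 := ne_of_gt h2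
  have h2ne' : ((N:ℝ) + 2) ≠ 0 := ne_of_gt h2'
  set m : ℝ := ((N:ℝ) - 2) / 2 with hmdef
  set a : ℝ := 8 * (N : ℝ) / (((N : ℝ) - 2) * ((N : ℝ) + 2)) with hadef
  set b : ℝ := 2 * (N : ℝ) / ((N : ℝ) + 2) with hbdef
  set s : ℝ := ((N:ℝ) - 2) * b with hsdef
  set α : ℝ := ((N : ℝ) * ((N : ℝ) - 2)) ^ (((N : ℝ) - 2) / 4) with hαdef
  have hα : 0 < α := Real.rpow_pos_of_pos (by nlinarith) _
  have ha : 0 < a := by rw [hadef]; positivity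
  have hb : 0 < b := by rw [hbdef]; positivity
  have hm : 0 < m := by rw [hmdef]; positivity
  have hsn : (N:ℝ) < s := by
    have hd : s - (N:ℝ) = ((N:ℝ) * ((N:ℝ) - 6)) / ((N:ℝ) + 2) := by
      rw [hsdef, hbdef]; field_simp; ring
    have : 0 < s - (N:ℝ) := by
      rw [hd]; apply div_pos (by nlinarith) h2'
    linarith
  set K : ℝ := α ^ a * α ^ b with hKdef
  have hK : 0 < K := by positivity
  set vol : ℝ := (volume (ball (0 : EuclideanSpace ℝ (Fin N)) 1)).toReal with hvdef
  have hvol : 0 ≤ vol := ENNReal.toReal_nonneg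
  set C₀ : ℝ := K * ((N:ℝ) * vol / (s - (N:ℝ))) with hC₀def
  have hC₀ : 0 ≤ C₀ := by
    apply mul_nonneg hK.le
    apply div_nonneg (by positivity) (by linarith)
  refine ⟨C₀ + 1, by linarith, ?_⟩
  intro δ₁ δ₂ hδ₂ h12 hrρ
  have hδ₁ : 0 < δ₁ := lt_of_lt_of_le hδ₂ h12
  set r : ℝ := Real.sqrt (δ₁ * δ₂) with hrdef
  have hrpos : 0 < r := Real.sqrt_pos.mpr (by positivity)
  set T : Set (EuclideanSpace ℝ (Fin N)) := {x | r ≤ ‖x‖} with hTdef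
  set S : Set (EuclideanSpace ℝ (Fin N)) := {x | r ≤ ‖x‖ ∧ ‖x‖ ≤ ρ} with hSdef
  have hST : S ⊆ T := fun x hx => hx.1
  have radial := radial_aux N (by omega) hsn hrpos
  have hSeq : S = Metric.closedBall (0 : EuclideanSpace ℝ (Fin N)) ρ ∩ T := by
    ext x
    simp only [hSdef, hTdef, Set.mem_setOf_eq, Set.mem_inter_iff, mem_closedBall_zero_iff]
    tauto
  have hScomp : IsCompact S := by
    rw [hSeq]
    exact (isCompact_closedBall _ ρ).inter_right
      (isClosed_le continuous_const continuous_norm)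
  have hSmeas : MeasurableSet S := hScomp.measurableSet
  -- continuity of the integrand
  have hcb : ∀ δ : ℝ, 0 < δ → Continuous (fun x : EuclideanSpace ℝ (Fin N) => bubble N δ x) := by
    intro δ hδ
    unfold bubble
    apply Continuous.div continuous_const
    · exact (continuous_const.add ((continuous_norm).pow 2)).rpow_const
        (fun x => Or.inl (ne_of_gt (add_pos_of_pos_of_nonneg (pow_pos hδ 2) (sq_nonneg _))))
    · intro x
      positivity
  have hcont : Continuous (fun x : EuclideanSpace ℝ (Fin N) =>
      (bubble N δ₁ x) ^ a * (bubble N δ₂ x) ^ b) :=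
    ((hcb δ₁ hδ₁).rpow_const (fun x => Or.inr ha.le)).mul
      ((hcb δ₂ hδ₂).rpow_const (fun x => Or.inr hb.le))
  have hintS : IntegrableOn (fun x : EuclideanSpace ℝ (Fin N) =>
      (bubble N δ₁ x) ^ a * (bubble N δ₂ x) ^ b) S volume :=
    hcont.continuousOn.integrableOn_compact hScomp
  set D : ℝ := δ₁ ^ (-(m * a)) * δ₂ ^ (m * b) with hDdef
  have hD : 0 ≤ D :=
    mul_nonneg (Real.rpow_nonneg hδ₁.le _) (Real.rpow_nonneg hδ₂.le _)
  have hintB : IntegrableOn (fun x : EuclideanSpace ℝ (Fin N) =>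
      K * D * ‖x‖ ^ (-s)) T volume := radial.1.const_mul _
  -- pointwise bound on S
  have hpt : ∀ x ∈ S, (bubble N δ₁ x) ^ a * (bubble N δ₂ x) ^ b ≤ K * D * ‖x‖ ^ (-s) := by
    intro x hx
    have hx1 : 0 < ‖x‖ := lt_of_lt_of_le hrpos hx.1
    have hN2 : 2 ≤ N := by omega
    have e1 : (bubble N δ₁ x) ^ a ≤ (α * δ₁ ^ (-m)) ^ a :=
      Real.rpow_le_rpow (bubble_nonneg N hN2 hδ₁.le x) (bubble_le_one N hN2 hδ₁ x) ha.le
    have e2 : (bubble N δ₂ x) ^ b ≤ (α * (δ₂ ^ m * ‖x‖ ^ (-((N:ℝ) - 2)))) ^ b :=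
      Real.rpow_le_rpow (bubble_nonneg N hN2 hδ₂.le x) (bubble_le_two N hN2 hδ₂ hx1) hb.le
    calc (bubble N δ₁ x) ^ a * (bubble N δ₂ x) ^ b
        ≤ (α * δ₁ ^ (-m)) ^ a * (α * (δ₂ ^ m * ‖x‖ ^ (-((N:ℝ) - 2)))) ^ b :=
          mul_le_mul e1 e2 (Real.rpow_nonneg (bubble_nonneg N hN2 hδ₂.le x) _)
            (Real.rpow_nonneg (by positivity) _)
      _ = K * D * ‖x‖ ^ (-s) := by
          rw [Real.mul_rpow hα.le (Real.rpow_nonneg hδ₁.le _),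
            Real.mul_rpow hα.le (by positivity),
            Real.mul_rpow (Real.rpow_nonneg hδ₂.le _) (Real.rpow_nonneg (norm_nonneg x) _),
            ← Real.rpow_mul hδ₁.le, ← Real.rpow_mul hδ₂.le,
            ← Real.rpow_mul (norm_nonneg x),
            show (-m) * a = -(m * a) by ring,
            show (-((N:ℝ) - 2)) * b = -(((N:ℝ) - 2) * b) by ring]
          rw [hKdef, hDdef, hsdef]
          ring
  -- the exponent identities
  have id1 : -(m * a) + 1 / 2 * ((N:ℝ) - s) = -((N:ℝ) / 2) := by
    rw [hmdef, hadef, hsdef, hbdef]; exact exp_id1 N h2ne h2ne'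
  have id2 : m * b + 1 / 2 * ((N:ℝ) - s) = (N:ℝ) / 2 := by
    rw [hmdef, hbdef, hsdef]; exact exp_id2 N h2ne h2ne'
  have hDr : D * r ^ ((N:ℝ) - s) = (δ₂ / δ₁) ^ ((N:ℝ) / 2) := by
    rw [hrdef, Real.sqrt_eq_rpow, ← Real.rpow_mul (by positivity : (0:ℝ) ≤ δ₁ * δ₂),
      Real.mul_rpow hδ₁.le hδ₂.le, hDdef]
    calc δ₁ ^ (-(m * a)) * δ₂ ^ (m * b) *
          (δ₁ ^ (1 / 2 * ((N:ℝ) - s)) * δ₂ ^ (1 / 2 * ((N:ℝ) - s)))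
        = (δ₁ ^ (-(m * a)) * δ₁ ^ (1 / 2 * ((N:ℝ) - s))) *
          (δ₂ ^ (m * b) * δ₂ ^ (1 / 2 * ((N:ℝ) - s))) := by ring
      _ = δ₁ ^ (-(m * a) + 1 / 2 * ((N:ℝ) - s)) * δ₂ ^ (m * b + 1 / 2 * ((N:ℝ) - s)) := by
          rw [← Real.rpow_add hδ₁, ← Real.rpow_add hδ₂]
      _ = δ₁ ^ (-((N:ℝ) / 2)) * δ₂ ^ ((N:ℝ) / 2) := by rw [id1, id2]
      _ = (δ₂ / δ₁) ^ ((N:ℝ) / 2) := by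
          rw [Real.div_rpow hδ₂.le hδ₁.le, Real.rpow_neg hδ₁.le, div_eq_mul_inv]
          ring
  have hX : (0:ℝ) ≤ (δ₂ / δ₁) ^ ((N:ℝ) / 2) := Real.rpow_nonneg (by positivity) _
  calc (∫ x in S, (bubble N δ₁ x) ^ a * (bubble N δ₂ x) ^ b)
      ≤ ∫ x in S, K * D * ‖x‖ ^ (-s) :=
        setIntegral_mono_on hintS (hintB.mono_set hST) hSmeas hpt
    _ = K * D * ∫ x in S, ‖x‖ ^ (-s) := by
        rw [integral_const_mul]
    _ ≤ K * D * ∫ x in T, ‖x‖ ^ (-s) := by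
        apply mul_le_mul_of_nonneg_left _ (mul_nonneg hK.le hD)
        exact setIntegral_mono_set radial.1
          (Filter.Eventually.of_forall (fun x => Real.rpow_nonneg (norm_nonneg x) _))
          (HasSubset.Subset.eventuallyLE hST)
    _ = K * D * ((N:ℝ) * vol * (r ^ ((N:ℝ) - s) / (s - (N:ℝ)))) := by
        rw [radial.2, hvdef]
    _ = C₀ * (D * r ^ ((N:ℝ) - s)) := by rw [hC₀def]; ring
    _ = C₀ * (δ₂ / δ₁) ^ ((N:ℝ) / 2) := by rw [hDr]
    _ ≤ (C₀ + 1) * (δ₂ / δ₁) ^ ((N:ℝ) / 2) := by nlinarith
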